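/- Let A be a commutative unital C*-algebra, let a, b ∈ A, define P(z) = (z - a)(z - b) and P'(z) = 2z - (a + b) for z ∈ A, and let c = (a + b)/2. Then for every z ∈ A, (P(z) - P(c))(P(z) - P(c))* ≤ ((2-1)/2)² · (z - c) P'(z) P'(z)* (z - c)*, i.e. (P(z) - P(c))(P(z) - P(c))* ≤ (1/4) · (z - c) P'(z) P'(z)* (z - c)* in the order of self-adjoint elements of A. In particular the strong form of the C*-algebraic Smale mean value conjecture holds for degree 2 polynomials, with w = c the critical point. -/
import Mathlib


/-- **Strong C*-algebraic Smale mean value conjecture in degree 2.**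
For `P(z) = (z-a)(z-b)` over a commutative unital C*-algebra, with derivative
`P'(z) = 2z - (a+b)` and critical point `c = (a+b)/2`, one has
`(P(z)-P(c))(P(z)-P(c))* ≤ ((2-1)/2)² (z-c) P'(z) P'(z)* (z-c)*` for every `z`. -/
theorem degree_two_strong_smale {A : Type*} [NormedCommRing A] [StarRing A]
    [CStarRing A] [CompleteSpace A] [NormedAlgebra ℂ A] [StarModule ℂ A]
    [PartialOrder A] [StarOrderedRing A]
    (a b : A) (P P' : A → A)
    (hP : ∀ z, P z = (z - a) * (z - b))
    (hP' : ∀ z, P' z = 2 * z - (a + b))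
    (c : A) (hc : c = (1 / 2 : ℂ) • (a + b)) (z : A) :
    (P z - P c) * star (P z - P c)
      ≤ (((2 - 1) / 2 : ℝ) ^ 2) • ((z - c) * P' z * star (P' z) * star (z - c)) := by
  have h2 : (2 : A) * c = a + b := by
    rw [hc, two_mul, ← two_smul ℂ, smul_smul]
    norm_num
  have key : P z - P c = (z - c) * (z - c) := by
    rw [hP, hP]
    linear_combination (z - c) * h2
  have hP'z : P' z = 2 * (z - c) := by
    rw [hP', ← h2]; ring
  apply le_of_eq
  rw [key, hP'z]
  have h4 : ((z - c) * (2 * (z - c)) * star (2 * (z - c)) * star (z - c))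
      = (4 : ℝ) • ((z - c) * (z - c) * star ((z - c) * (z - c))) := by
    simp only [star_mul, star_ofNat]
    rw [Algebra.smul_def, map_ofNat]
    ring
  rw [h4, smul_smul]
  norm_num
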